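/- For every one-way deterministic one-counter automaton M over the alphabet {a,b,c,d} and every N ∈ ℕ, there exist strings u₁ ∈ ONE and u₂ ∈ NONE such that, writing (s₁,v₁) and (s₂,v₂) for the configurations of M after reading ¢u₁ and ¢u₂ respectively, either (s₁,v₁) = (s₂,v₂), or s₁ = s₂ and |v₁| > N and |v₂| > N. -/
import Mathlib


/-- Input symbols extended with the left (`cent`) and right (`dollar`) end-markers. -/
inductive TSym (α : Type) : Type
  | cent : TSym α
  | letter : α → TSym α
  | dollar : TSym α

/-- The tape content `¢ w $` for an input word `w`. -/
def tagged {α : Type} (w : List α) : List (TSym α) :=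
  TSym.cent :: (w.map TSym.letter ++ [TSym.dollar])

/-- A one-way deterministic one-counter automaton. -/
structure OneD1CA (α : Type) where
  Q : Type
  [fintypeQ : Fintype Q]
  [decQ : DecidableEq Q]
  q0 : Q
  acc : Set Q
  m : ℕ
  δ : Q → TSym α → Bool → Q × ℤ
  bound : ∀ q σ z, |(δ q σ z).2| ≤ (m : ℤ)

attribute [instance] OneD1CA.fintypeQ OneD1CA.decQ

namespace OneD1CA

variable {α : Type} (M : OneD1CA α)

/-- One computation step on a configuration (state, counter value). -/
def step (p : M.Q × ℤ) (σ : TSym α) : M.Q × ℤ :=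
  ((M.δ p.1 σ (decide (p.2 = 0))).1, p.2 + (M.δ p.1 σ (decide (p.2 = 0))).2)

/-- Configuration reached from the initial configuration after reading a list of tape symbols. -/
def confAfter (l : List (TSym α)) : M.Q × ℤ :=
  l.foldl M.step (M.q0, 0)

/-- The automaton accepts `w` iff the state after reading `¢ w $` is accepting. -/
def accepts (w : List α) : Prop :=
  (M.confAfter (tagged w)).1 ∈ M.acc

/-- The automaton recognizes the language `L` if it accepts exactly the members of `L`. -/
def recognizes (L : Set (List α)) : Prop :=
  ∀ w : List α, M.accepts w ↔ w ∈ L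

end OneD1CA

/-- The alphabet `{a, b, c, d}`. -/
inductive ΓN : Type
  | a : ΓN
  | b : ΓN
  | c : ΓN
  | d : ΓN
deriving DecidableEq

/-- Exactly one of three propositions holds. -/
def exactlyOne (P Q R : Prop) : Prop :=
  (P ∧ ¬Q ∧ ¬R) ∨ (¬P ∧ Q ∧ ¬R) ∨ (¬P ∧ ¬Q ∧ R)

/-- `#_a(u) = #_b(u)`. -/
def eqAB (u : List ΓN) : Prop := u.count ΓN.a = u.count ΓN.b
/-- `#_b(u) = #_c(u)`. -/
def eqBC (u : List ΓN) : Prop := u.count ΓN.b = u.count ΓN.c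
/-- `#_c(u) = #_a(u)`. -/
def eqCA (u : List ΓN) : Prop := u.count ΓN.c = u.count ΓN.a

/-- The language `ONE`: strings `u ++ y` with `u ∈ {a,b,c}*`, `y ∈ {d}*`,
`|y| ≥ |u|`, and exactly one of the three count equalities holding for `u`. -/
def ONE : Language ΓN :=
  {w | ∃ u y : List ΓN, w = u ++ y ∧ (∀ x ∈ u, x ≠ ΓN.d) ∧ (∀ x ∈ y, x = ΓN.d) ∧
    u.length ≤ y.length ∧ exactlyOne (eqAB u) (eqBC u) (eqCA u)}

/-- The language `NONE`: as `ONE`, but none of the three count equalities holds. -/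
def NONE : Language ΓN :=
  {w | ∃ u y : List ΓN, w = u ++ y ∧ (∀ x ∈ u, x ≠ ΓN.d) ∧ (∀ x ∈ y, x = ΓN.d) ∧
    u.length ≤ y.length ∧ ¬ eqAB u ∧ ¬ eqBC u ∧ ¬ eqCA u}

/-! ### Auxiliary machinery -/

section Aux

variable (M : OneD1CA ΓN)

/-- pure next state (zero-test off) -/
def pq (σ : TSym ΓN) (q : M.Q) : M.Q := (M.δ q σ false).1
/-- pure counter increment (zero-test off) -/
def pv (σ : TSym ΓN) (q : M.Q) : ℤ := (M.δ q σ false).2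

/-- pure orbit of states -/
def orb (σ : TSym ΓN) (q : M.Q) : ℕ → M.Q
  | 0 => q
  | t + 1 => pq M σ (orb σ q t)

/-- partial sums of counter increments along pure orbit -/
def sm (σ : TSym ΓN) (q : M.Q) : ℕ → ℤ
  | 0 => 0
  | t + 1 => sm σ q t + pv M σ (orb M σ q t)

lemma sm_bound (σ : TSym ΓN) (q : M.Q) (t : ℕ) : |sm M σ q t| ≤ (M.m : ℤ) * t := by
  induction t with
  | zero => simp [sm]
  | succ t ih =>
    have hb := M.bound (orb M σ q t) σ false
    calc |sm M σ q (t+1)| = |sm M σ q t + pv M σ (orb M σ q t)| := rfl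
      _ ≤ |sm M σ q t| + |pv M σ (orb M σ q t)| := abs_add_le _ _
      _ ≤ (M.m : ℤ) * t + M.m := by exact add_le_add ih hb
      _ = (M.m : ℤ) * (t + 1) := by push_cast; ring

lemma step_pure (q : M.Q) (v : ℤ) (σ : TSym ΓN) (hv : v ≠ 0) :
    M.step (q, v) σ = (pq M σ q, v + pv M σ q) := by
  simp [OneD1CA.step, pq, pv, hv]

lemma pure_run (σ : TSym ΓN) (q : M.Q) (v : ℤ) (T : ℕ)
    (h : ∀ t < T, v + sm M σ q t ≠ 0) :
    (List.replicate T σ).foldl M.step (q, v) = (orb M σ q T, v + sm M σ q T) := by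
  induction T with
  | zero => simp [orb, sm]
  | succ T ih =>
    rw [List.replicate_succ', List.foldl_append,
      ih (fun t ht => h t (Nat.lt_succ_of_lt ht))]
    show M.step (orb M σ q T, v + sm M σ q T) σ = _
    rw [step_pure M _ _ _ (h T (Nat.lt_succ_self T))]
    show (orb M σ q (T+1), v + sm M σ q T + pv M σ (orb M σ q T)) = _
    rw [show v + sm M σ q T + pv M σ (orb M σ q T) = v + sm M σ q (T+1) by
      show _ = v + (sm M σ q T + pv M σ (orb M σ q T)); ring]

lemma orb_sm_shift (σ : TSym ΓN) (q : M.Q) {t1 t2 : ℕ}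
    (h : orb M σ q t1 = orb M σ q t2) (k : ℕ) :
    orb M σ q (t1 + k) = orb M σ q (t2 + k) ∧
    sm M σ q (t2 + k) = sm M σ q (t1 + k) + (sm M σ q t2 - sm M σ q t1) := by
  induction k with
  | zero => constructor <;> simp [h]
  | succ k ih =>
    rw [show t1 + (k+1) = (t1 + k) + 1 from rfl, show t2 + (k+1) = (t2 + k) + 1 from rfl]
    constructor
    · show pq M σ (orb M σ q (t1+k)) = pq M σ (orb M σ q (t2+k)); rw [ih.1]
    · show sm M σ q (t2+k) + pv M σ (orb M σ q (t2+k)) =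
        sm M σ q (t1+k) + pv M σ (orb M σ q (t1+k)) + _
      rw [ih.2, ih.1]; ring

lemma orb_sm_cycle (σ : TSym ΓN) (q : M.Q) {t1 t2 : ℕ} (hle : t1 ≤ t2)
    (h : orb M σ q t1 = orb M σ q t2) (e : ℕ) :
    orb M σ q (t1 + e * (t2 - t1)) = orb M σ q t1 ∧
    sm M σ q (t1 + e * (t2 - t1)) = sm M σ q t1 + (e : ℤ) * (sm M σ q t2 - sm M σ q t1) := by
  induction e with
  | zero => simp
  | succ e ih =>
    have hsh := orb_sm_shift M σ q h (e * (t2 - t1))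
    have harith : t1 + (e + 1) * (t2 - t1) = t2 + e * (t2 - t1) := by rw [Nat.succ_mul]; omega
    rw [harith]
    constructor
    · rw [← hsh.1, ih.1]
    · rw [hsh.2, ih.2]; push_cast; ring

lemma orb_exists_rep (σ : TSym ΓN) (q : M.Q) :
    ∃ t1 t2, t1 < t2 ∧ orb M σ q t1 = orb M σ q t2 := by
  obtain ⟨x, y, hxy, h⟩ := Fintype.exists_ne_map_eq_of_card_lt
    (fun i : Fin (Fintype.card M.Q + 1) => orb M σ q i) (by simp)
  rcases lt_or_gt_of_ne (show (x : ℕ) ≠ y from fun hc => hxy (Fin.ext hc)) with hlt | hlt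
  · exact ⟨x, y, hlt, h⟩
  · exact ⟨y, x, hlt, h.symm⟩

/-- configuration after the cent marker -/
def C0 : M.Q × ℤ := M.step (M.q0, 0) TSym.cent

def Aseq (i : ℕ) : M.Q × ℤ := (List.replicate i (TSym.letter ΓN.a)).foldl M.step (C0 M)

lemma Aseq_succ (i : ℕ) : Aseq M (i+1) = M.step (Aseq M i) (TSym.letter ΓN.a) := by
  unfold Aseq; rw [List.replicate_succ', List.foldl_append]; rfl

lemma Aseq_pure (I : ℕ) (h : ∀ i, I ≤ i → (Aseq M i).2 ≠ 0) (k : ℕ) :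
    Aseq M (I + k) =
      (orb M (TSym.letter ΓN.a) (Aseq M I).1 k,
       (Aseq M I).2 + sm M (TSym.letter ΓN.a) (Aseq M I).1 k) := by
  induction k with
  | zero => simp [orb, sm]
  | succ k ih =>
    rw [show I + (k+1) = (I + k) + 1 from rfl, Aseq_succ, ih]
    have hnz : (Aseq M I).2 + sm M (TSym.letter ΓN.a) (Aseq M I).1 k ≠ 0 := by
      have := h (I + k) (Nat.le_add_right _ _)
      rwa [ih] at this
    rw [step_pure M _ _ _ hnz]
    show (orb M _ _ (k+1), _) = (orb M _ _ (k+1), (Aseq M I).2 + sm M _ _ (k+1))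
    rw [show (Aseq M I).2 + sm M (TSym.letter ΓN.a) (Aseq M I).1 k +
        pv M (TSym.letter ΓN.a) (orb M (TSym.letter ΓN.a) (Aseq M I).1 k) =
        (Aseq M I).2 + sm M (TSym.letter ΓN.a) (Aseq M I).1 (k+1) by
      show _ = (Aseq M I).2 + (sm M _ _ k + pv M _ _); ring]

lemma escape (hinj : Function.Injective (Aseq M)) (B : ℤ) :
    ∃ I : ℕ, ∀ i, I ≤ i → B < |(Aseq M i).2| := by
  have hfin : {i : ℕ | |(Aseq M i).2| ≤ B}.Finite := by
    have h2 : ((Set.univ : Set M.Q) ×ˢ Set.Icc (-B) B).Finite :=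
      Set.finite_univ.prod (Set.finite_Icc _ _)
    refine Set.Finite.subset (h2.preimage hinj.injOn) ?_
    intro i hi
    simp only [Set.mem_preimage, Set.mem_prod, Set.mem_univ, Set.mem_Icc, true_and]
    exact abs_le.mp hi
  obtain ⟨I, hI⟩ := hfin.bddAbove
  refine ⟨I + 1, fun i hi => ?_⟩
  by_contra hc
  have : i ∈ {i : ℕ | |(Aseq M i).2| ≤ B} := not_lt.mp hc
  have := hI this
  omega

end Aux

section Mem

lemma counts_abc (x y z : ℕ) :
    (List.replicate x ΓN.a ++ List.replicate y ΓN.b ++ List.replicate z ΓN.c).count ΓN.a = x ∧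
    (List.replicate x ΓN.a ++ List.replicate y ΓN.b ++ List.replicate z ΓN.c).count ΓN.b = y ∧
    (List.replicate x ΓN.a ++ List.replicate y ΓN.b ++ List.replicate z ΓN.c).count ΓN.c = z := by
  refine ⟨?_, ?_, ?_⟩ <;> simp [List.count_append, List.count_replicate]

lemma mem_ONE (x y z K : ℕ) (hK : x + y + z ≤ K)
    (h : exactlyOne (x = y) (y = z) (z = x)) :
    (List.replicate x ΓN.a ++ List.replicate y ΓN.b ++ List.replicate z ΓN.c ++
      List.replicate K ΓN.d) ∈ ONE := by
  obtain ⟨ca, cb, cc⟩ := counts_abc x y z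
  refine ⟨List.replicate x ΓN.a ++ List.replicate y ΓN.b ++ List.replicate z ΓN.c,
    List.replicate K ΓN.d, rfl, ?_, ?_, ?_, ?_⟩
  · intro t ht
    rcases List.mem_append.mp ht with ht | ht
    · rcases List.mem_append.mp ht with ht | ht
      · rw [List.eq_of_mem_replicate ht]; decide
      · rw [List.eq_of_mem_replicate ht]; decide
    · rw [List.eq_of_mem_replicate ht]; decide
  · intro t ht; exact List.eq_of_mem_replicate ht
  · simp; omega
  · unfold exactlyOne eqAB eqBC eqCA
    rw [ca, cb, cc]
    exact h

lemma mem_NONE (x y z K : ℕ) (hK : x + y + z ≤ K)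
    (h1 : x ≠ y) (h2 : y ≠ z) (h3 : z ≠ x) :
    (List.replicate x ΓN.a ++ List.replicate y ΓN.b ++ List.replicate z ΓN.c ++
      List.replicate K ΓN.d) ∈ NONE := by
  obtain ⟨ca, cb, cc⟩ := counts_abc x y z
  refine ⟨List.replicate x ΓN.a ++ List.replicate y ΓN.b ++ List.replicate z ΓN.c,
    List.replicate K ΓN.d, rfl, ?_, ?_, ?_, ?_, ?_, ?_⟩
  · intro t ht
    rcases List.mem_append.mp ht with ht | ht
    · rcases List.mem_append.mp ht with ht | ht
      · rw [List.eq_of_mem_replicate ht]; decide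
      · rw [List.eq_of_mem_replicate ht]; decide
    · rw [List.eq_of_mem_replicate ht]; decide
  · intro t ht; exact List.eq_of_mem_replicate ht
  · simp; omega
  · unfold eqAB; rw [ca, cb]; exact h1
  · unfold eqBC; rw [cb, cc]; exact h2
  · unfold eqCA; rw [cc, ca]; exact h3

lemma conf_quad (M : OneD1CA ΓN) (x y z K : ℕ) :
    M.confAfter (TSym.cent :: (List.replicate x ΓN.a ++ List.replicate y ΓN.b ++
      List.replicate z ΓN.c ++ List.replicate K ΓN.d).map TSym.letter) =
    (List.replicate K (TSym.letter ΓN.d)).foldl M.step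
      ((List.replicate z (TSym.letter ΓN.c)).foldl M.step
        ((List.replicate y (TSym.letter ΓN.b)).foldl M.step (Aseq M x))) := by
  unfold OneD1CA.confAfter Aseq C0
  simp [List.map_append, List.map_replicate, List.foldl_append]

end Mem

lemma nz_of_big {W x B : ℤ} (hB : B < |W|) (hx : |x| ≤ B) : W + x ≠ 0 := by
  intro hc
  have hW : W = -x := by linarith
  rw [hW, abs_neg] at hB
  linarith

theorem stmt9_caseB (M : OneD1CA ΓN) (N : ℕ) (hinj : Function.Injective (Aseq M)) :
    ∃ u1 u2 : List ΓN, u1 ∈ ONE ∧ u2 ∈ NONE ∧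
      (M.confAfter (TSym.cent :: u1.map TSym.letter) =
          M.confAfter (TSym.cent :: u2.map TSym.letter) ∨
        ((M.confAfter (TSym.cent :: u1.map TSym.letter)).1 =
            (M.confAfter (TSym.cent :: u2.map TSym.letter)).1 ∧
          (N : ℤ) < |(M.confAfter (TSym.cent :: u1.map TSym.letter)).2| ∧
          (N : ℤ) < |(M.confAfter (TSym.cent :: u2.map TSym.letter)).2|)) := by
  obtain ⟨I0, hI0⟩ := escape M hinj 0
  have hnz : ∀ i, I0 ≤ i → (Aseq M i).2 ≠ 0 := by
    intro i hi hc
    have := hI0 i hi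
    rw [hc] at this; simp at this
  have hA := Aseq_pure M I0 hnz
  set La := TSym.letter ΓN.a with hLadef
  set Lb := TSym.letter ΓN.b with hLbdef
  set Lc := TSym.letter ΓN.c with hLcdef
  set q0' := (Aseq M I0).1 with hq0'
  set v0 := (Aseq M I0).2 with hv0
  obtain ⟨t1, t2, ht12, horbA⟩ := orb_exists_rep M La q0'
  have hacyc := orb_sm_cycle M La q0' (le_of_lt ht12) horbA
  set Δ := sm M La q0' t2 - sm M La q0' t1 with hΔdef
  have hΔ : Δ ≠ 0 := by
    intro h0
    have hsmeq : sm M La q0' t1 = sm M La q0' t2 := by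
      rw [hΔdef] at h0; linarith
    have he : Aseq M (I0 + t1) = Aseq M (I0 + t2) := by
      rw [hA t1, hA t2, horbA, hsmeq]
    have := hinj he
    omega
  set q1 := orb M La q0' t1 with hq1
  obtain ⟨s, s2, hs12, horbB⟩ := orb_exists_rep M Lb q1
  have hbcyc := orb_sm_cycle M Lb q1 (le_of_lt hs12) horbB
  set δb := sm M Lb q1 s2 - sm M Lb q1 s with hδbdef
  set e := Δ.natAbs with hedef
  have hepos : 1 ≤ e := Int.natAbs_pos.mpr hΔ
  set R := e * (s2 - s) with hRdef
  have hRpos : 1 ≤ R := by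
    have h1 : 1 ≤ s2 - s := by omega
    calc 1 = 1 * 1 := rfl
      _ ≤ e * (s2 - s) := Nat.mul_le_mul hepos h1
  set q2 := orb M Lb q1 s with hq2
  set B1 := (M.m : ℤ) * (s + R) + (M.m : ℤ) * s with hB1def
  obtain ⟨I1, hI1⟩ := escape M hinj B1
  set L := max I1 (s + R + 1) with hLdef
  have heZ : (e : ℤ) = |Δ| := by rw [hedef, Int.abs_eq_natAbs]
  have hex : ∃ l l' : ℕ, L ≤ l ∧ L ≤ l' ∧
      (l : ℤ) * Δ = (l' : ℤ) * Δ + (e : ℤ) * δb := by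
    rcases hΔ.lt_or_gt with hneg | hpos
    · have heZ' : (e : ℤ) = -Δ := by rw [heZ, abs_of_neg hneg]
      rcases le_or_gt 0 δb with hb | hb
      · refine ⟨L, L + δb.toNat, Nat.le_refl L, Nat.le_add_right _ _, ?_⟩
        have h1 : ((δb.toNat : ℤ)) = δb := Int.toNat_of_nonneg hb
        push_cast
        rw [h1, heZ']; ring
      · refine ⟨L + (-δb).toNat, L, Nat.le_add_right _ _, Nat.le_refl L, ?_⟩
        have h1 : (((-δb).toNat : ℤ)) = -δb := Int.toNat_of_nonneg (by linarith)
        push_cast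
        rw [h1, heZ']; ring
    · have heZ' : (e : ℤ) = Δ := by rw [heZ, abs_of_pos hpos]
      rcases le_or_gt 0 δb with hb | hb
      · refine ⟨L + δb.toNat, L, Nat.le_add_right _ _, Nat.le_refl L, ?_⟩
        have h1 : ((δb.toNat : ℤ)) = δb := Int.toNat_of_nonneg hb
        push_cast
        rw [h1, heZ']; ring
      · refine ⟨L, L + (-δb).toNat, Nat.le_refl L, Nat.le_add_right _ _, ?_⟩
        have h1 : (((-δb).toNat : ℤ)) = -δb := Int.toNat_of_nonneg (by linarith)
        push_cast
        rw [h1, heZ']; ring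
  obtain ⟨l, l', hlL, hl'L, heq⟩ := hex
  -- the two a-block lengths
  have hmul : ∀ l0 : ℕ, l0 ≤ l0 * (t2 - t1) := by
    intro l0
    calc l0 = l0 * 1 := (Nat.mul_one l0).symm
      _ ≤ l0 * (t2 - t1) := Nat.mul_le_mul_left l0 (by omega)
  have hW : ∀ l0 : ℕ, Aseq M (I0 + (t1 + l0 * (t2 - t1))) =
      (q1, v0 + sm M La q0' t1 + (l0 : ℤ) * Δ) := by
    intro l0
    rw [hA (t1 + l0 * (t2 - t1)), (hacyc l0).1, (hacyc l0).2]
    rw [hΔdef]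
    exact Prod.ext rfl (by ring)
  have hbig : ∀ l0 : ℕ, L ≤ l0 → B1 < |v0 + sm M La q0' t1 + (l0 : ℤ) * Δ| := by
    intro l0 hl0
    have hge : I1 ≤ I0 + (t1 + l0 * (t2 - t1)) := by
      have := hmul l0
      have : l0 ≤ l0 * (t2 - t1) := this
      have hI1L : I1 ≤ L := le_max_left _ _
      omega
    have := hI1 _ hge
    rwa [hW l0] at this
  -- abbreviations for the two counter values after the a-blocks
  set W1 := v0 + sm M La q0' t1 + (l : ℤ) * Δ with hW1def
  set W2 := v0 + sm M La q0' t1 + (l' : ℤ) * Δ with hW2def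
  have hbig1 : B1 < |W1| := hbig l hlL
  have hbig2 : B1 < |W2| := hbig l' hl'L
  have hmnn : (0 : ℤ) ≤ (M.m : ℤ) := Int.natCast_nonneg _
  have hsmb : ∀ t : ℕ, t ≤ s + R → |sm M Lb q1 t| ≤ (M.m : ℤ) * (s + R) := by
    intro t ht
    calc |sm M Lb q1 t| ≤ (M.m : ℤ) * t := sm_bound M Lb q1 t
      _ ≤ (M.m : ℤ) * (s + R) := by
          apply mul_le_mul_of_nonneg_left _ hmnn
          exact_mod_cast ht
  -- the b-runs
  have hbrun1 : (List.replicate s Lb).foldl M.step (q1, W1) =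
      (q2, W1 + sm M Lb q1 s) := by
    apply pure_run
    intro t ht
    apply nz_of_big hbig1
    calc |sm M Lb q1 t| ≤ (M.m : ℤ) * (s + R) := hsmb t (by omega)
      _ ≤ B1 := by rw [hB1def]; nlinarith [hmnn, Nat.cast_nonneg (α := ℤ) s]
  have horbB2 := hbcyc e
  have hbrun2 : (List.replicate (s + R) Lb).foldl M.step (q1, W2) =
      (q2, W2 + (sm M Lb q1 s + (e : ℤ) * δb)) := by
    have h := pure_run M Lb q1 W2 (s + R) ?_
    · rw [h, hRdef, horbB2.1, horbB2.2, hδbdef]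
    · intro t ht
      apply nz_of_big hbig2
      calc |sm M Lb q1 t| ≤ (M.m : ℤ) * (s + R) := hsmb t (by omega)
        _ ≤ B1 := by rw [hB1def]; nlinarith [hmnn, Nat.cast_nonneg (α := ℤ) s]
  -- the c-runs
  have hsmc : ∀ t : ℕ, t ≤ s → |sm M Lc q2 t| ≤ (M.m : ℤ) * s := by
    intro t ht
    calc |sm M Lc q2 t| ≤ (M.m : ℤ) * t := sm_bound M Lc q2 t
      _ ≤ (M.m : ℤ) * s := by
          apply mul_le_mul_of_nonneg_left _ hmnn
          exact_mod_cast ht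
  have hsmbs : |sm M Lb q1 s| ≤ (M.m : ℤ) * (s + R) := hsmb s (by omega)
  have hsmbsR : |sm M Lb q1 s + (e : ℤ) * δb| ≤ (M.m : ℤ) * (s + R) := by
    have := hsmb (s + R) (le_refl _)
    rwa [hRdef, horbB2.2, hδbdef] at this
  have hcrun1 : (List.replicate s Lc).foldl M.step (q2, W1 + sm M Lb q1 s) =
      (orb M Lc q2 s, W1 + sm M Lb q1 s + sm M Lc q2 s) := by
    have h := pure_run M Lc q2 (W1 + sm M Lb q1 s) s ?_
    · rw [h]
    · intro t ht
      have h2 : W1 + sm M Lb q1 s + sm M Lc q2 t =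
          W1 + (sm M Lb q1 s + sm M Lc q2 t) := by ring
      rw [h2]
      apply nz_of_big hbig1
      calc |sm M Lb q1 s + sm M Lc q2 t| ≤ |sm M Lb q1 s| + |sm M Lc q2 t| := abs_add_le _ _
        _ ≤ (M.m : ℤ) * (s + R) + (M.m : ℤ) * s := add_le_add hsmbs (hsmc t (by omega))
        _ = B1 := by rw [hB1def]
  have hcrun2 : (List.replicate s Lc).foldl M.step
        (q2, W2 + (sm M Lb q1 s + (e : ℤ) * δb)) =
      (orb M Lc q2 s, W2 + (sm M Lb q1 s + (e : ℤ) * δb) + sm M Lc q2 s) := by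
    have h := pure_run M Lc q2 (W2 + (sm M Lb q1 s + (e : ℤ) * δb)) s ?_
    · rw [h]
    · intro t ht
      have h2 : W2 + (sm M Lb q1 s + (e : ℤ) * δb) + sm M Lc q2 t =
          W2 + ((sm M Lb q1 s + (e : ℤ) * δb) + sm M Lc q2 t) := by ring
      rw [h2]
      apply nz_of_big hbig2
      calc |(sm M Lb q1 s + (e : ℤ) * δb) + sm M Lc q2 t|
          ≤ |sm M Lb q1 s + (e : ℤ) * δb| + |sm M Lc q2 t| := abs_add_le _ _
        _ ≤ (M.m : ℤ) * (s + R) + (M.m : ℤ) * s := add_le_add hsmbsR (hsmc t (by omega))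
        _ = B1 := by rw [hB1def]
  -- the final counter values agree
  have hfinal : W1 + sm M Lb q1 s + sm M Lc q2 s =
      W2 + (sm M Lb q1 s + (e : ℤ) * δb) + sm M Lc q2 s := by
    rw [hW1def, hW2def]
    have : (l : ℤ) * Δ = (l' : ℤ) * Δ + (e : ℤ) * δb := heq
    linarith
  -- bounds on the a-block lengths needed for language membership
  have hlen1 : s + R < I0 + (t1 + l * (t2 - t1)) := by
    have h1 := hmul l
    have h2 : s + R + 1 ≤ L := le_max_right _ _
    omega
  have hlen2 : s + R < I0 + (t1 + l' * (t2 - t1)) := by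
    have h1 := hmul l'
    have h2 : s + R + 1 ≤ L := le_max_right _ _
    omega
  -- assemble the two words
  refine ⟨List.replicate (I0 + (t1 + l * (t2 - t1))) ΓN.a ++ List.replicate s ΓN.b ++
      List.replicate s ΓN.c ++
      List.replicate (max ((I0 + (t1 + l * (t2 - t1))) + s + s)
        ((I0 + (t1 + l' * (t2 - t1))) + (s + R) + s)) ΓN.d,
    List.replicate (I0 + (t1 + l' * (t2 - t1))) ΓN.a ++ List.replicate (s + R) ΓN.b ++
      List.replicate s ΓN.c ++
      List.replicate (max ((I0 + (t1 + l * (t2 - t1))) + s + s)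
        ((I0 + (t1 + l' * (t2 - t1))) + (s + R) + s)) ΓN.d, ?_, ?_, Or.inl ?_⟩
  · apply mem_ONE _ _ _ _ (le_trans (by omega) (le_max_left _ _))
    exact Or.inr (Or.inl ⟨by omega, rfl, by omega⟩)
  · exact mem_NONE _ _ _ _ (le_trans (by omega) (le_max_right _ _))
      (by omega) (by omega) (by omega)
  · rw [conf_quad, conf_quad, hW l, hW l']
    rw [← hW1def, ← hW2def, hbrun1, hbrun2, hcrun1, hcrun2, hfinal]

/-- for every 1D1CA `M` and every `N`, there are `u₁ ∈ ONE` and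
`u₂ ∈ NONE` reaching either the same configuration after `¢u₁` resp. `¢u₂`, or the
same state with both counter values of absolute value exceeding `N`. -/
theorem stmt9 (M : OneD1CA ΓN) (N : ℕ) :
    ∃ u1 u2 : List ΓN, u1 ∈ ONE ∧ u2 ∈ NONE ∧
      (M.confAfter (TSym.cent :: u1.map TSym.letter) =
          M.confAfter (TSym.cent :: u2.map TSym.letter) ∨
        ((M.confAfter (TSym.cent :: u1.map TSym.letter)).1 =
            (M.confAfter (TSym.cent :: u2.map TSym.letter)).1 ∧
          (N : ℤ) < |(M.confAfter (TSym.cent :: u1.map TSym.letter)).2| ∧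
          (N : ℤ) < |(M.confAfter (TSym.cent :: u2.map TSym.letter)).2|)) := by
  by_cases hinj : Function.Injective (Aseq M)
  · exact stmt9_caseB M N hinj
  · -- Case A : two indices with equal configurations after the a-block
    obtain ⟨i, j, hij, hne⟩ := Function.not_injective_iff.mp hinj
    have main : ∀ i j : ℕ, i < j → Aseq M i = Aseq M j →
        ∃ u1 u2 : List ΓN, u1 ∈ ONE ∧ u2 ∈ NONE ∧
          (M.confAfter (TSym.cent :: u1.map TSym.letter) =
              M.confAfter (TSym.cent :: u2.map TSym.letter) ∨
            ((M.confAfter (TSym.cent :: u1.map TSym.letter)).1 =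
                (M.confAfter (TSym.cent :: u2.map TSym.letter)).1 ∧
              (N : ℤ) < |(M.confAfter (TSym.cent :: u1.map TSym.letter)).2| ∧
              (N : ℤ) < |(M.confAfter (TSym.cent :: u2.map TSym.letter)).2|)) := by
      intro i j hij h
      set T := i + j + 1 with hT
      set K := i + j + T with hK
      refine ⟨List.replicate i ΓN.a ++ List.replicate i ΓN.b ++ List.replicate T ΓN.c ++
          List.replicate K ΓN.d,
        List.replicate j ΓN.a ++ List.replicate i ΓN.b ++ List.replicate T ΓN.c ++
          List.replicate K ΓN.d, ?_, ?_, Or.inl ?_⟩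
      · exact mem_ONE i i T K (by omega) (Or.inl ⟨rfl, by omega, by omega⟩)
      · exact mem_NONE j i T K (by omega) (by omega) (by omega) (by omega)
      · rw [conf_quad, conf_quad, h]
    rcases lt_or_gt_of_ne hne with hlt | hlt
    · exact main i j hlt hij
    · exact main j i hlt hij.symm
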